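/- arXiv:1802.07761 — 2 statements merged into one kernel-verified Lean document; each statement's English description precedes it below -/
import Mathlib

section
/- Let G be a Vilenkin group and n ∈ ℕ_+ with x ∈ I_{⟨n⟩+1}(e_{⟨n⟩}) (so x_j = 0 for j < ⟨n⟩ and x_{⟨n⟩} = 1). Then |D_{M_{⟨n⟩}}(x) · ∑_{s=0}^{n_{⟨n⟩}−1} r_{⟨n⟩}^s(x)| = M_{⟨n⟩} · sin(π n_{⟨n⟩}/m_{⟨n⟩}) / sin(π/m_{⟨n⟩}) ≥ M_{⟨n⟩}. -/
open MeasureTheory Complex Real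

def Mseq (m : ℕ → ℕ) : ℕ → ℕ
  | 0 => 1
  | k + 1 => m k * Mseq m k

def digit (m : ℕ → ℕ) (n j : ℕ) : ℕ := n / Mseq m j % m j

noncomputable def hi (m : ℕ → ℕ) (n : ℕ) : ℕ := sSup {j | digit m n j ≠ 0}

noncomputable def lo (m : ℕ → ℕ) (n : ℕ) : ℕ := sInf {j | digit m n j ≠ 0}

noncomputable def rho (m : ℕ → ℕ) (n : ℕ) : ℕ := hi m n - lo m n

abbrev Gm (m : ℕ → ℕ) := ∀ k, ZMod (m k)

instance (n : ℕ) : MeasurableSpace (ZMod n) := ⊤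

noncomputable def rad (m : ℕ → ℕ) (j : ℕ) (x : Gm m) : ℂ :=
  Complex.exp (2 * Real.pi * Complex.I * ((x j).val : ℂ) / (m j : ℂ))

noncomputable def vil (m : ℕ → ℕ) (n : ℕ) (x : Gm m) : ℂ :=
  ∏ᶠ j, rad m j x ^ digit m n j

noncomputable def Dker (m : ℕ → ℕ) (n : ℕ) (x : Gm m) : ℂ :=
  ∑ k ∈ Finset.range n, vil m k x

/-- The defining property of the normalized Haar measure on the Vilenkin group:
every cylinder set `I_n(x)` has measure `1 / M_n`. -/
def IsVilenkinHaar (m : ℕ → ℕ) (μ : Measure (Gm m)) : Prop :=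
  ∀ (n : ℕ) (x : Gm m), μ {y : Gm m | ∀ j < n, y j = x j} = (Mseq m n : ENNReal)⁻¹

noncomputable def vilCoeff (m : ℕ → ℕ) (μ : Measure (Gm m)) (f : Gm m → ℂ) (j : ℕ) : ℂ :=
  ∫ t, f t * (starRingEnd ℂ) (vil m j t) ∂μ

noncomputable def Svil (m : ℕ → ℕ) (μ : Measure (Gm m)) (f : Gm m → ℂ) (n : ℕ) (x : Gm m) : ℂ :=
  ∑ j ∈ Finset.range n, vilCoeff m μ f j * vil m j x

lemma Mseq_pos (m : ℕ → ℕ) (hm : ∀ k, 2 ≤ m k) (k : ℕ) : 0 < Mseq m k := by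
  induction k with
  | zero => simp [Mseq]
  | succ k ih => exact Nat.mul_pos (lt_of_lt_of_le two_pos (hm k)) ih

lemma two_pow_le_Mseq (m : ℕ → ℕ) (hm : ∀ k, 2 ≤ m k) (k : ℕ) : 2 ^ k ≤ Mseq m k := by
  induction k with
  | zero => simp [Mseq]
  | succ k ih => calc 2 ^ (k+1) = 2 * 2 ^ k := by ring
                 _ ≤ m k * Mseq m k := Nat.mul_le_mul (hm k) ih
                 _ = Mseq m (k+1) := rfl

lemma Mseq_mono (m : ℕ → ℕ) (hm : ∀ k, 2 ≤ m k) : Monotone (Mseq m) :=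
  monotone_nat_of_le_succ fun k => by
    calc Mseq m k = 1 * Mseq m k := (one_mul _).symm
    _ ≤ m k * Mseq m k := Nat.mul_le_mul (le_trans one_le_two (hm k)) le_rfl

lemma digitSet_nonempty (m : ℕ → ℕ) (hm : ∀ k, 2 ≤ m k) (n : ℕ) (hn : 1 ≤ n) :
    {j | digit m n j ≠ 0}.Nonempty := by
  have hex : ∃ j, n < Mseq m j :=
    ⟨n + 1, lt_of_lt_of_le (lt_of_lt_of_le (Nat.lt_two_pow_self (n := n)) (Nat.pow_le_pow_right two_pos (Nat.le_succ n))) (two_pow_le_Mseq m hm (n+1))⟩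
  classical
  set j := Nat.find hex with hj
  have hjs : n < Mseq m j := Nat.find_spec hex
  have hj0 : j ≠ 0 := by
    intro h
    rw [h] at hjs; simp [Mseq] at hjs; omega
  obtain ⟨k, hk⟩ := Nat.exists_eq_succ_of_ne_zero hj0
  have hkl : Mseq m k ≤ n := by
    by_contra h
    exact Nat.find_min hex (by omega : k < j) (by omega)
  refine ⟨k, ?_⟩
  have h1 : 1 ≤ n / Mseq m k := (Nat.one_le_div_iff (Mseq_pos m hm k)).2 hkl
  have h2 : n / Mseq m k < m k := by
    rw [Nat.div_lt_iff_lt_mul (Mseq_pos m hm k)]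
    rw [hk] at hjs
    simpa [Mseq, Nat.mul_comm] using hjs
  simp only [digit, Set.mem_setOf_eq]
  rw [Nat.mod_eq_of_lt h2]
  omega

lemma abs_exp_theta_sub_one (θ : ℝ) :
    ‖Complex.exp ((θ : ℂ) * Complex.I) - 1‖ = 2 * |Real.sin (θ / 2)| := by
  have h : Complex.exp ((θ : ℂ) * Complex.I) - 1
      = ((Real.cos θ - 1 : ℝ) : ℂ) + ((Real.sin θ : ℝ) : ℂ) * Complex.I := by
    rw [Complex.exp_mul_I, ← Complex.ofReal_cos, ← Complex.ofReal_sin]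
    push_cast
    ring
  rw [h, Complex.norm_add_mul_I, Real.abs_sin_half]
  have harg : (Real.cos θ - 1) ^ 2 + Real.sin θ ^ 2 = 4 * ((1 - Real.cos θ) / 2) := by
    nlinarith [Real.sin_sq_add_cos_sq θ]
  rw [harg, show (4 : ℝ) * ((1 - Real.cos θ)/2) = 2^2 * ((1 - Real.cos θ)/2) by ring,
    Real.sqrt_mul (by positivity), Real.sqrt_sq (by norm_num : (0:ℝ) ≤ 2)]

lemma sin_div_le_sin (M d : ℕ) (hM : 2 ≤ M) (hd1 : 1 ≤ d) (hd2 : d < M) :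
    Real.sin (Real.pi / M) ≤ Real.sin (Real.pi * d / M) := by
  have hMpos : (0:ℝ) < M := by positivity
  have hpi := Real.pi_pos
  have h1M : Real.pi / M ∈ Set.Icc (-(Real.pi/2)) (Real.pi/2) := by
    constructor
    · have := div_pos hpi hMpos; linarith
    · rw [div_le_div_iff₀ hMpos two_pos]; nlinarith [show (2:ℝ) ≤ M by exact_mod_cast hM]
  by_cases hc : Real.pi * d / M ≤ Real.pi / 2
  · apply Real.strictMonoOn_sin.monotoneOn h1M
    · constructor
      · have : (0:ℝ) ≤ Real.pi * d / M := by positivity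
        nlinarith
      · exact hc
    · rw [div_le_div_iff₀ hMpos hMpos]
      nlinarith [mul_pos hpi hMpos, show (1:ℝ) ≤ d by exact_mod_cast hd1]
  · push_neg at hc
    rw [show Real.pi * d / M = Real.pi - (Real.pi * (M - d) / M) by field_simp; ring,
      Real.sin_pi_sub]
    apply Real.strictMonoOn_sin.monotoneOn h1M
    · constructor
      · have hdM : (d:ℝ) ≤ (M:ℝ) := by exact_mod_cast hd2.le
        have : (0:ℝ) ≤ Real.pi * (M - d) / M := by
          apply div_nonneg _ hMpos.le
          nlinarith
        nlinarith
      · have : Real.pi - Real.pi * d / M ≤ Real.pi / 2 := by linarith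
        calc Real.pi * ((M:ℝ) - d) / M = Real.pi - Real.pi * d / M := by field_simp
        _ ≤ Real.pi / 2 := this
    · rw [div_le_div_iff₀ hMpos hMpos]
      have : (d:ℝ) + 1 ≤ (M:ℝ) := by exact_mod_cast hd2
      nlinarith [mul_pos hpi hMpos]

/-- For `n ≥ 1` and `x ∈ I_{⟨n⟩+1}(e_{⟨n⟩})`,
`|D_{M_{⟨n⟩}}(x) ∑_{s=0}^{n_{⟨n⟩}-1} r_{⟨n⟩}^s(x)|
  = M_{⟨n⟩} sin (π n_{⟨n⟩}/m_{⟨n⟩}) / sin (π/m_{⟨n⟩}) ≥ M_{⟨n⟩}`. -/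
theorem stmt_11 (m : ℕ → ℕ) (hm : ∀ k, 2 ≤ m k) (n : ℕ) (hn : 1 ≤ n)
    (x : Gm m) (hx1 : ∀ j < lo m n, x j = 0) (hx2 : x (lo m n) = 1) :
    ‖(Dker m (Mseq m (lo m n)) x *
          ∑ s ∈ Finset.range (digit m n (lo m n)), rad m (lo m n) x ^ s)‖
        = (Mseq m (lo m n) : ℝ) *
            (Real.sin (Real.pi * digit m n (lo m n) / m (lo m n)) /
              Real.sin (Real.pi / m (lo m n))) ∧
      (Mseq m (lo m n) : ℝ) ≤
        ‖(Dker m (Mseq m (lo m n)) x *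
          ∑ s ∈ Finset.range (digit m n (lo m n)), rad m (lo m n) x ^ s)‖ := by
  set N := lo m n with hN
  have hS : {j | digit m n j ≠ 0}.Nonempty := digitSet_nonempty m hm n hn
  have hdne : digit m n N ≠ 0 := Nat.sInf_mem hS
  set d := digit m n N with hdd
  have hmN : 2 ≤ m N := hm N
  have hd2 : d < m N := Nat.mod_lt _ (by omega)
  have hd1 : 1 ≤ d := Nat.one_le_iff_ne_zero.2 hdne
  have hvil : ∀ k < Mseq m N, vil m k x = 1 := by
    intro k hk
    apply finprod_eq_one_of_forall_eq_one
    intro j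
    rcases lt_or_ge j N with hj | hj
    · have hx : x j = 0 := hx1 j hj
      haveI : NeZero (m j) := ⟨by have := hm j; omega⟩
      have : rad m j x = 1 := by
        simp [rad, hx, ZMod.val_zero]
      rw [this, one_pow]
    · have : digit m k j = 0 := by
        have hk2 : k < Mseq m j := lt_of_lt_of_le hk (Mseq_mono m hm hj)
        simp [digit, Nat.div_eq_of_lt hk2]
      rw [this, pow_zero]
  have hD : Dker m (Mseq m N) x = (Mseq m N : ℂ) := by
    unfold Dker
    rw [Finset.sum_congr rfl (fun k hk => hvil k (Finset.mem_range.1 hk))]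
    simp
  haveI : Fact (1 < m N) := ⟨by omega⟩
  have hrad : rad m N x = Complex.exp (((2 * Real.pi / m N : ℝ) : ℂ) * Complex.I) := by
    rw [rad, hx2, ZMod.val_one]
    congr 1
    push_cast
    ring
  have hmR : (0:ℝ) < (m N : ℝ) := by positivity
  have hsin1 : 0 < Real.sin (Real.pi / m N) := by
    apply Real.sin_pos_of_pos_of_lt_pi
    · positivity
    · rw [div_lt_iff₀ hmR]; nlinarith [Real.pi_pos, show (2:ℝ) ≤ m N by exact_mod_cast hmN]
  have hsind : 0 < Real.sin (Real.pi * d / m N) := by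
    apply Real.sin_pos_of_pos_of_lt_pi
    · have hd0 : (0:ℝ) < d := by exact_mod_cast hd1
      positivity
    · rw [div_lt_iff₀ hmR]; nlinarith [Real.pi_pos, show (d:ℝ) < m N by exact_mod_cast hd2]
  set z := rad m N x with hz
  have habs1 : ‖z - 1‖ = 2 * Real.sin (Real.pi / m N) := by
    rw [hrad, abs_exp_theta_sub_one,
      show (2*Real.pi/(m N : ℝ))/2 = Real.pi / m N by ring, abs_of_pos hsin1]
  have hzd : z ^ d = Complex.exp (((2*Real.pi*d/m N : ℝ):ℂ) * Complex.I) := by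
    rw [hrad, ← Complex.exp_nat_mul]
    congr 1
    push_cast
    ring
  have habsd : ‖z ^ d - 1‖ = 2 * Real.sin (Real.pi * d / m N) := by
    rw [hzd, abs_exp_theta_sub_one,
      show (2*Real.pi*(d:ℝ)/(m N : ℝ))/2 = Real.pi * d / m N by ring, abs_of_pos hsind]
  have hz1 : z ≠ 1 := by
    intro h
    rw [h] at habs1
    simp at habs1
    linarith
  have hgeom : ‖∑ s ∈ Finset.range d, z ^ s‖
      = Real.sin (Real.pi * d / m N) / Real.sin (Real.pi / m N) := by
    rw [geom_sum_eq hz1, norm_div, habsd, habs1,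
      mul_div_mul_left _ _ (two_ne_zero)]
  have hmain : ‖Dker m (Mseq m N) x * ∑ s ∈ Finset.range d, z ^ s‖
      = (Mseq m N : ℝ) * (Real.sin (Real.pi * d / m N) / Real.sin (Real.pi / m N)) := by
    rw [norm_mul, hD, hgeom]
    simp
  refine ⟨hmain, ?_⟩
  rw [hmain]
  have hratio : 1 ≤ Real.sin (Real.pi * d / m N) / Real.sin (Real.pi / m N) :=
    (one_le_div hsin1).2 (sin_div_le_sin (m N) d hmN hd1 hd2)
  have hMnn : (0:ℝ) ≤ (Mseq m N : ℝ) := by positivity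
  exact le_mul_of_one_le_right hMnn hratio
end

section
/- Let G be a Vilenkin group, a a p-atom supported on I_N, and α ∈ ℕ with ⟨α⟩ ≥ N. Then for every x ∉ I_N, S_α a(x) = 0. -/
open MeasureTheory Complex Real

/-- `a : G_m → ℂ` is a `p`-atom supported on the cylinder `I_N`: it is measurable,
vanishes off `I_N`, satisfies `‖a‖_∞ ≤ μ(I_N)^{-1/p} = M_N^{1/p}` and has mean zero. -/
def IsPAtom (m : ℕ → ℕ) (μ : Measure (Gm m)) (p : ℝ) (N : ℕ) (a : Gm m → ℂ) : Prop :=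
  Measurable a ∧
    (∀ x : Gm m, (¬ ∀ j < N, x j = 0) → a x = 0) ∧
    (∀ x : Gm m, ‖a x‖ ≤ (Mseq m N : ℝ) ^ (1 / p)) ∧
    ∫ x, a x ∂μ = 0

section Helpers
variable {m : ℕ → ℕ}

lemma Mpos (hm : ∀ k, 2 ≤ m k) (k : ℕ) : 0 < Mseq m k := by
  induction k with
  | zero => simp [Mseq]
  | succ k ih => have := hm k; simp only [Mseq]; exact Nat.mul_pos (by omega) ih

lemma Mmono (hm : ∀ k, 2 ≤ m k) {j k : ℕ} (h : j ≤ k) : Mseq m j ≤ Mseq m k := by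
  induction k with
  | zero => simpa using Nat.le_antisymm h (Nat.zero_le j) ▸ le_refl _
  | succ k ih =>
    rcases Nat.lt_or_ge j (k+1) with h' | h'
    · have := ih (Nat.lt_succ_iff.mp h')
      calc Mseq m j ≤ Mseq m k := this
        _ ≤ m k * Mseq m k := Nat.le_mul_of_pos_left _ (by have := hm k; omega)
        _ = Mseq m (k+1) := rfl
    · have : j = k + 1 := le_antisymm h h'
      simp [this]

lemma Mdvd {j k : ℕ} (h : j ≤ k) : Mseq m j ∣ Mseq m k := by
  induction k with
  | zero => simpa using Nat.le_antisymm h (Nat.zero_le j) ▸ dvd_refl _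
  | succ k ih =>
    rcases Nat.lt_or_ge j (k+1) with h' | h'
    · exact (ih (Nat.lt_succ_iff.mp h')).trans ⟨m k, by simp [Mseq, Nat.mul_comm]⟩
    · have : j = k + 1 := le_antisymm h h'
      simp [this]

lemma two_pow_le (hm : ∀ k, 2 ≤ m k) (k : ℕ) : 2 ^ k ≤ Mseq m k := by
  induction k with
  | zero => simp [Mseq]
  | succ k ih =>
    have := hm k
    calc 2 ^ (k+1) = 2 * 2 ^ k := by ring
      _ ≤ m k * Mseq m k := Nat.mul_le_mul this ih
      _ = Mseq m (k+1) := rfl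

lemma digit_eq_zero_of_lt {n j : ℕ} (h : n < Mseq m j) : digit m n j = 0 := by
  simp [digit, Nat.div_eq_of_lt h]

lemma vil_eq_prod (hm : ∀ k, 2 ≤ m k) {n K : ℕ} (h : n < Mseq m K) (x : Gm m) :
    vil m n x = ∏ j ∈ Finset.range K, rad m j x ^ digit m n j := by
  apply finprod_eq_prod_of_mulSupport_subset
  intro j hj
  simp only [Function.mulSupport, Set.mem_setOf_eq] at hj
  simp only [Finset.coe_range, Set.mem_Iio]
  by_contra hK
  push_neg at hK
  have : n < Mseq m j := lt_of_lt_of_le h (Mmono hm hK)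
  exact hj (by rw [digit_eq_zero_of_lt this, pow_zero])

lemma digit_low (hm : ∀ k, 2 ≤ m k) {j N : ℕ} (hj : j < N) (q r : ℕ) :
    digit m (q * Mseq m N + r) j = digit m r j := by
  obtain ⟨c, hc⟩ := Mdvd (show j + 1 ≤ N from hj)
  have hMj : 0 < Mseq m j := Mpos hm j
  have h1 : q * Mseq m N = (q * m j * c) * Mseq m j := by
    rw [hc]; show q * (m j * Mseq m j * c) = _; ring
  rw [digit, h1, Nat.add_comm, Nat.add_mul_div_right _ _ hMj, digit]
  have h2 : q * m j * c = (q * c) * m j := by ring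
  rw [h2, Nat.add_mul_mod_self_right]

lemma digit_qM_zero (hm : ∀ k, 2 ≤ m k) {j N : ℕ} (hj : j < N) (q : ℕ) :
    digit m (q * Mseq m N) j = 0 := by
  have := digit_low hm hj q 0
  rw [Nat.add_zero] at this
  rw [this]; simp [digit]

lemma digit_high (hm : ∀ k, 2 ≤ m k) {j N : ℕ} (hj : N ≤ j) {r : ℕ} (hr : r < Mseq m N) (q : ℕ) :
    digit m (q * Mseq m N + r) j = digit m (q * Mseq m N) j := by
  obtain ⟨c, hc⟩ := Mdvd (m := m) hj
  have hMN : 0 < Mseq m N := Mpos hm N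
  rw [digit, digit, hc, ← Nat.div_div_eq_div_mul, ← Nat.div_div_eq_div_mul]
  congr 2
  rw [Nat.add_comm, Nat.add_mul_div_right _ _ hMN, Nat.div_eq_of_lt hr,
    Nat.zero_add, Nat.mul_div_cancel _ hMN]

lemma digit_add (hm : ∀ k, 2 ≤ m k) {N r : ℕ} (hr : r < Mseq m N) (q j : ℕ) :
    digit m (q * Mseq m N + r) j = digit m (q * Mseq m N) j + digit m r j := by
  rcases Nat.lt_or_ge j N with hj | hj
  · rw [digit_low hm hj, digit_qM_zero hm hj, Nat.zero_add]
  · rw [digit_high hm hj hr, digit_eq_zero_of_lt (lt_of_lt_of_le hr (Mmono hm hj)), Nat.add_zero]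

lemma exists_bound (hm : ∀ k, 2 ≤ m k) (n : ℕ) : n < Mseq m n :=
  lt_of_lt_of_le (Nat.lt_two_pow_self (n := n)) (two_pow_le hm n)

lemma vil_mul (hm : ∀ k, 2 ≤ m k) {N r : ℕ} (hr : r < Mseq m N) (q : ℕ) (x : Gm m) :
    vil m (q * Mseq m N + r) x = vil m (q * Mseq m N) x * vil m r x := by
  set n := q * Mseq m N + r with hn
  have hK : n < Mseq m n := exists_bound hm n
  have h1 : q * Mseq m N < Mseq m n := Nat.lt_of_le_of_lt (Nat.le_add_right _ _) hK
  have h2 : r < Mseq m n := Nat.lt_of_le_of_lt (Nat.le_add_left _ _) hK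
  rw [vil_eq_prod hm hK, vil_eq_prod hm h1, vil_eq_prod hm h2, ← Finset.prod_mul_distrib]
  apply Finset.prod_congr rfl
  intro j _
  rw [hn, digit_add hm hr q j, pow_add]

lemma vil_qM (hm : ∀ k, 2 ≤ m k) {N q : ℕ} (hq : q < m N) (x : Gm m) :
    vil m (q * Mseq m N) x = rad m N x ^ q := by
  have h : q * Mseq m N < Mseq m (N + 1) := by
    show _ < m N * Mseq m N
    exact (Nat.mul_lt_mul_right (Mpos hm N)).mpr hq
  rw [vil_eq_prod hm h, Finset.prod_range_succ]
  have hd : digit m (q * Mseq m N) N = q := by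
    rw [digit, Nat.mul_div_cancel _ (Mpos hm N), Nat.mod_eq_of_lt hq]
  rw [hd]
  have : ∀ j ∈ Finset.range N, rad m j x ^ digit m (q * Mseq m N) j = 1 := by
    intro j hj
    rw [digit_qM_zero hm (Finset.mem_range.mp hj), pow_zero]
  rw [Finset.prod_congr rfl this, Finset.prod_const_one, one_mul]

lemma rad_of_zero (hm : ∀ k, 2 ≤ m k) {j : ℕ} {t : Gm m} (ht : t j = 0) : rad m j t = 1 := by
  haveI : NeZero (m j) := ⟨by have := hm j; omega⟩
  rw [rad, ht, ZMod.val_zero]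
  simp

lemma vil_on_IN (hm : ∀ k, 2 ≤ m k) {N r : ℕ} (hr : r < Mseq m N) {t : Gm m}
    (ht : ∀ j < N, t j = 0) : vil m r t = 1 := by
  rw [vil_eq_prod hm hr]
  apply Finset.prod_eq_one
  intro j hj
  rw [rad_of_zero hm (ht j (Finset.mem_range.mp hj)), one_pow]

lemma sum_range_mul_split (f : ℕ → ℂ) (t b : ℕ) :
    ∑ k ∈ Finset.range (t * b), f k
      = ∑ q ∈ Finset.range t, ∑ r ∈ Finset.range b, f (q * b + r) := by
  induction t with
  | zero => simp
  | succ t ih => rw [Nat.succ_mul, Finset.sum_range_add, ih, Finset.sum_range_succ]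

lemma Dsum_prod (hm : ∀ k, 2 ≤ m k) (N : ℕ) (x : Gm m) :
    ∑ r ∈ Finset.range (Mseq m N), vil m r x
      = ∏ j ∈ Finset.range N, ∑ d ∈ Finset.range (m j), rad m j x ^ d := by
  induction N with
  | zero =>
    show ∑ r ∈ Finset.range 1, vil m r x = 1
    rw [Finset.sum_range_one, vil_eq_prod hm (show (0:ℕ) < Mseq m 0 from Nat.zero_lt_one) x,
      Finset.range_zero, Finset.prod_empty]
  | succ N ih =>
    show ∑ r ∈ Finset.range (m N * Mseq m N), vil m r x = _
    rw [sum_range_mul_split, Finset.prod_range_succ, ← ih]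
    have : ∀ q ∈ Finset.range (m N), ∑ r ∈ Finset.range (Mseq m N), vil m (q * Mseq m N + r) x
        = rad m N x ^ q * ∑ r ∈ Finset.range (Mseq m N), vil m r x := by
      intro q hq
      rw [Finset.mul_sum]
      apply Finset.sum_congr rfl
      intro r hr
      rw [vil_mul hm (Finset.mem_range.mp hr) q x, vil_qM hm (Finset.mem_range.mp hq) x]
    rw [Finset.sum_congr rfl this, ← Finset.sum_mul]
    ring

lemma geom_zero (hm : ∀ k, 2 ≤ m k) {j : ℕ} {x : Gm m} (hx : x j ≠ 0) :
    ∑ d ∈ Finset.range (m j), rad m j x ^ d = 0 := by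
  haveI : NeZero (m j) := ⟨by have := hm j; omega⟩
  set v : ℕ := (x j).val with hv
  have hv0 : v ≠ 0 := fun h => hx ((ZMod.val_eq_zero _).mp h)
  have hvlt : v < m j := ZMod.val_lt (x j)
  have hmC : (m j : ℂ) ≠ 0 := Nat.cast_ne_zero.mpr (by have := hm j; omega)
  set z : ℂ := rad m j x with hz
  have hz1 : z ≠ 1 := by
    rw [hz, rad]
    intro h
    rw [Complex.exp_eq_one_iff] at h
    obtain ⟨n, hn⟩ := h
    rw [div_eq_iff hmC] at hn
    have hπ : (2 * (Real.pi:ℂ) * Complex.I) ≠ 0 := by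
      simp [Complex.I_ne_zero, Real.pi_ne_zero]
    have h2 : (v : ℂ) = (n : ℂ) * (m j : ℂ) := by
      apply mul_left_cancel₀ hπ
      rw [hn]; ring
    have h3 : (v : ℤ) = n * (m j : ℤ) := by exact_mod_cast h2
    have h4 : (m j : ℤ) ∣ (v : ℤ) := ⟨n, by rw [h3]; ring⟩
    have h5 : m j ∣ v := Int.natCast_dvd_natCast.mp h4
    have := Nat.le_of_dvd (Nat.pos_of_ne_zero hv0) h5
    omega
  have hzn : z ^ (m j) = 1 := by
    rw [hz, rad, ← Complex.exp_nat_mul]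
    have : (m j : ℂ) * (2 * Real.pi * Complex.I * v / m j) = (v : ℂ) * (2 * Real.pi * Complex.I) := by
      field_simp
    rw [this]
    exact_mod_cast Complex.exp_int_mul_two_pi_mul_I (v : ℤ)
  rw [geom_sum_eq hz1, hzn, sub_self, zero_div]

lemma MN_dvd (hm : ∀ k, 2 ≤ m k) {N α : ℕ} (hα : N ≤ lo m α) : Mseq m N ∣ α := by
  have hd : ∀ j < N, digit m α j = 0 := by
    intro j hj
    by_contra h
    have : lo m α ≤ j := Nat.sInf_le h
    omega
  suffices h : ∀ k, k ≤ N → Mseq m k ∣ α from h N le_rfl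
  intro k
  induction k with
  | zero => intro _; exact (show Mseq m 0 = 1 from rfl) ▸ one_dvd α
  | succ k ih =>
    intro hk
    obtain ⟨c, hc⟩ := ih (by omega)
    have h2 : digit m α k = 0 := hd k (by omega)
    have hdiv : α / Mseq m k = c := by rw [hc, Nat.mul_div_cancel_left _ (Mpos hm k)]
    rw [digit, hdiv] at h2
    obtain ⟨d, hdd⟩ := Nat.dvd_of_mod_eq_zero h2
    exact ⟨d, by rw [hc, hdd]; show _ = m k * Mseq m k * d; ring⟩

end Helpers

/-- If `a` is a `p`-atom supported on `I_N` and `⟨α⟩ ≥ N`, then `S_α a` vanishes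
outside `I_N`. -/
theorem stmt_16 (m : ℕ → ℕ) (hm : ∀ k, 2 ≤ m k) (μ : Measure (Gm m))
    (hprob : IsProbabilityMeasure μ) (hHaar : IsVilenkinHaar m μ)
    (p : ℝ) (hp0 : 0 < p) (hp1 : p ≤ 1) (N : ℕ) (a : Gm m → ℂ)
    (ha : IsPAtom m μ p N a) (α : ℕ) (hα : N ≤ lo m α) :
    ∀ x : Gm m, (¬ ∀ j < N, x j = 0) → Svil m μ a α x = 0 := by
  intro x hx
  obtain ⟨ha_meas, ha_supp, ha_bound, ha_mean⟩ := ha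
  obtain ⟨t, ht⟩ := MN_dvd hm hα
  have coeff_eq : ∀ q r, r < Mseq m N →
      vilCoeff m μ a (q * Mseq m N + r) = vilCoeff m μ a (q * Mseq m N) := by
    intro q r hr
    unfold vilCoeff
    congr 1
    funext s
    by_cases hs : ∀ j < N, s j = 0
    · rw [vil_mul hm hr q s, vil_on_IN hm hr hs, mul_one]
    · rw [ha_supp s hs, zero_mul, zero_mul]
  simp only [Svil]
  rw [ht, Nat.mul_comm, sum_range_mul_split]
  apply Finset.sum_eq_zero
  intro q hq
  have hcong : ∀ r ∈ Finset.range (Mseq m N),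
      vilCoeff m μ a (q * Mseq m N + r) * vil m (q * Mseq m N + r) x
        = vilCoeff m μ a (q * Mseq m N) * vil m (q * Mseq m N) x * vil m r x := by
    intro r hr
    rw [coeff_eq q r (Finset.mem_range.mp hr), vil_mul hm (Finset.mem_range.mp hr) q x]
    ring
  rw [Finset.sum_congr rfl hcong, ← Finset.mul_sum, Dsum_prod hm N x]
  push_neg at hx
  obtain ⟨j0, hj0, hxj0⟩ := hx
  rw [Finset.prod_eq_zero (Finset.mem_range.mpr hj0) (geom_zero hm hxj0), mul_zero]
end
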